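/- Let k be a nonnegative integer and suppose that the Fermat numbers F_0, F_1, …, F_{k−1} are all prime. Then n := F_0·F_1 ⋯ F_{k−1} (the empty product being 1) is a ℚ-optimal number with exactly k distinct prime factors. -/

import Mathlib

/-- A natural number `n` is `ℚ`-optimal if for every `m` with `0 ≤ m ≤ n`, the
polynomial `X^n - 1` has exactly one monic divisor of degree `m` in `ℚ[X]`. -/
def QOptimal (n : ℕ) : Prop :=
  1 ≤ n ∧ ∀ m : ℕ, m ≤ n → ∃! d : Polynomial ℚ, d.Monic ∧
    d ∣ (Polynomial.X ^ n - 1) ∧ d.natDegree = m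

/-- The `m`-th Fermat number `F_m = 2^(2^m) + 1`. -/
def fermat (m : ℕ) : ℕ := 2 ^ (2 ^ m) + 1

section Aux

open Finset Polynomial

lemma fermat_strictMono : StrictMono fermat := fun a b h => by
  unfold fermat
  have : (2:ℕ) ^ 2 ^ a < 2 ^ 2 ^ b :=
    Nat.pow_lt_pow_right one_lt_two (Nat.pow_lt_pow_right one_lt_two h)
  omega

lemma fermat_pos (i : ℕ) : 0 < fermat i := by unfold fermat; positivity

lemma fermat_prod_eq (k : ℕ) : ∏ i ∈ Finset.range k, fermat i = 2 ^ 2 ^ k - 1 := by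
  induction k with
  | zero => simp
  | succ k ih =>
    rw [Finset.prod_range_succ, ih]
    have ha : 1 ≤ (2:ℕ) ^ 2 ^ k := Nat.one_le_two_pow
    have h2 : (2:ℕ) ^ 2 ^ (k+1) = 2 ^ 2 ^ k * 2 ^ 2 ^ k := by
      rw [← pow_add]; ring_nf
    rw [h2]
    unfold fermat
    zify [ha, Nat.one_le_iff_ne_zero.mpr (by positivity : (2:ℕ)^2^k * 2^2^k ≠ 0)]
    ring

lemma sum_sort_eq (u : Finset ℕ) (f : ℕ → ℕ) :
    ((u.sort (· ≤ ·)).map f).sum = ∑ i ∈ u, f i := by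
  rw [Finset.sum, ← Finset.sort_eq u (· ≤ ·), Multiset.map_coe, Multiset.sum_coe]

lemma sum_two_pow_inj {u v : Finset ℕ}
    (h : ∑ i ∈ u, 2 ^ i = ∑ i ∈ v, 2 ^ i) : u = v := by
  have hu := Nat.bitIndices_twoPowsum (Finset.sortedLT_sort u)
  have hv := Nat.bitIndices_twoPowsum (Finset.sortedLT_sort v)
  rw [sum_sort_eq] at hu hv
  rw [← Finset.sort_toFinset u (· ≤ ·), ← Finset.sort_toFinset v (· ≤ ·), ← hu, ← hv, h]

lemma sum_two_pow_bitIndices (m : ℕ) : ∑ i ∈ m.bitIndices.toFinset, 2 ^ i = m := by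
  have hnd : m.bitIndices.Nodup := Nat.bitIndices_sorted.nodup
  rw [← sum_sort_eq, (List.toFinset_sort (· ≤ ·) hnd).mpr
    (Nat.bitIndices_sorted.pairwise.imp le_of_lt), Nat.twoPowSum_bitIndices]

lemma monic_eq_one_of_isUnit {d : ℚ[X]} (hd : d.Monic) (h : IsUnit d) : d = 1 :=
  Polynomial.eq_of_monic_of_associated hd monic_one (associated_one_iff_isUnit.mpr h)

lemma monic_dvd_prod_structure {s : Finset ℕ} {Q : ℕ → ℚ[X]}
    (hQm : ∀ t ∈ s, (Q t).Monic) (hQi : ∀ t ∈ s, Irreducible (Q t)) :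
    ∀ d : ℚ[X], d.Monic → d ∣ ∏ t ∈ s, Q t → ∃ u ⊆ s, d = ∏ t ∈ u, Q t := by
  classical
  induction s using Finset.induction with
  | empty =>
    intro d hd hdvd
    refine ⟨∅, Finset.Subset.refl _, ?_⟩
    simp only [Finset.prod_empty] at hdvd ⊢
    exact monic_eq_one_of_isUnit hd (isUnit_of_dvd_one hdvd)
  | @insert a s2 ha ih =>
    intro d hd hdvd
    rw [Finset.prod_insert ha] at hdvd
    obtain ⟨x, y, hx, hy, hxy⟩ := exists_dvd_and_dvd_of_dvd_mul hdvd
    have hx0 : x ≠ 0 := by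
      rintro rfl; simp at hxy; exact hd.ne_zero (by simp [hxy])
    have hy0 : y ≠ 0 := by
      rintro rfl; simp at hxy; exact hd.ne_zero (by simp [hxy])
    set x' := normalize x with hx'def
    set y' := normalize y with hy'def
    have hx'm : x'.Monic := Polynomial.monic_normalize hx0
    have hy'm : y'.Monic := Polynomial.monic_normalize hy0
    have hdeq : d = x' * y' := by
      refine Polynomial.eq_of_monic_of_associated hd (hx'm.mul hy'm) ?_
      rw [hxy]
      exact Associated.mul_mul (normalize_associated x).symm (normalize_associated y).symm
    have hx'dvd : x' ∣ Q a := (normalize_dvd_iff).mpr hx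
    have hy'dvd : y' ∣ ∏ t ∈ s2, Q t := (normalize_dvd_iff).mpr hy
    obtain ⟨u, hus, hu⟩ := ih (fun t ht => hQm t (Finset.mem_insert_of_mem ht))
      (fun t ht => hQi t (Finset.mem_insert_of_mem ht)) y' hy'm hy'dvd
    have hQa := hQi a (Finset.mem_insert_self a s2)
    obtain ⟨c, hc⟩ := hx'dvd
    rcases hQa.isUnit_or_isUnit hc with hux | huc
    · have : x' = 1 := monic_eq_one_of_isUnit hx'm hux
      exact ⟨u, hus.trans (Finset.subset_insert a s2),
        by rw [hdeq, this, one_mul, hu]⟩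
    · have hxQ : x' = Q a := by
        refine Polynomial.eq_of_monic_of_associated hx'm
          (hQm a (Finset.mem_insert_self a s2)) ?_
        exact ⟨huc.unit, by rw [IsUnit.unit_spec, ← hc]⟩
      refine ⟨insert a u, Finset.insert_subset_insert a hus, ?_⟩
      rw [Finset.prod_insert (fun h => ha (hus h)), hdeq, hxQ, hu]

lemma fermat_coprime {i j : ℕ} (hi : (fermat i).Prime) (hj : (fermat j).Prime)
    (hij : i ≠ j) : Nat.Coprime (fermat i) (fermat j) :=
  (Nat.coprime_primes hi hj).mpr fun h => hij (fermat_strictMono.injective h)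

lemma coprime_fermat_prod {a : ℕ} {S : Finset ℕ} (ha : (fermat a).Prime)
    (hS : ∀ i ∈ S, (fermat i).Prime) (haS : a ∉ S) :
    Nat.Coprime (fermat a) (∏ i ∈ S, fermat i) :=
  Nat.Coprime.prod_right fun i hi => fermat_coprime ha (hS i hi) (fun h => haS (h ▸ hi))

lemma totient_prod_fermat {S : Finset ℕ} (hS : ∀ i ∈ S, (fermat i).Prime) :
    (∏ i ∈ S, fermat i).totient = 2 ^ (∑ i ∈ S, 2 ^ i) := by
  classical
  induction S using Finset.induction with
  | empty => simp
  | @insert a S2 ha ih =>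
    rw [Finset.prod_insert ha, Finset.sum_insert ha,
      Nat.totient_mul (coprime_fermat_prod (hS a (Finset.mem_insert_self a S2))
        (fun i hi => hS i (Finset.mem_insert_of_mem hi)) ha),
      ih (fun i hi => hS i (Finset.mem_insert_of_mem hi)),
      Nat.totient_prime (hS a (Finset.mem_insert_self a S2)), pow_add]
    congr 1

lemma card_divisors_prod_fermat {k : ℕ} (hk : ∀ i < k, (fermat i).Prime) :
    (∏ i ∈ Finset.range k, fermat i).divisors.card = 2 ^ k := by
  induction k with
  | zero => simp
  | succ k ih =>
    rw [Finset.prod_range_succ,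
      Nat.Coprime.card_divisors_mul
        ((coprime_fermat_prod (hk k (Nat.lt_succ_self k))
          (fun i hi => hk i (Nat.lt_succ_of_lt (Finset.mem_range.mp hi)))
          (by simp)).symm),
      ih (fun i hi => hk i (Nat.lt_succ_of_lt hi)),
      (hk k (Nat.lt_succ_self k)).divisors]
    have : ({1, fermat k} : Finset ℕ).card = 2 := by
      rw [Finset.card_insert_of_notMem (by simp [(hk k (Nat.lt_succ_self k)).ne_one.symm]),
        Finset.card_singleton]
    rw [this]; ring

end Aux

open Finset Polynomial in
/-- If the Fermat numbers `F_0, …, F_{k-1}` are all prime, then `n = F_0 F_1 ⋯ F_{k-1}`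
is `ℚ`-optimal with exactly `k` distinct prime factors. -/
theorem QOptimal_of_fermat_primes (k : ℕ) (hk : ∀ i < k, (fermat i).Prime) :
    QOptimal (∏ i ∈ Finset.range k, fermat i) ∧
      (∏ i ∈ Finset.range k, fermat i).primeFactors.card = k := by
  classical
  set n := ∏ i ∈ Finset.range k, fermat i with hn
  have hprimes : ∀ i ∈ Finset.range k, (fermat i).Prime :=
    fun i hi => hk i (Finset.mem_range.mp hi)
  have hnpos : 0 < n := Finset.prod_pos (fun i _ => fermat_pos i)
  set N := 2 ^ k with hN
  have hNpos : 0 < (2:ℕ) ^ N := pow_pos (by norm_num) _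
  have hn_eq : n + 1 = 2 ^ N := by
    have h := fermat_prod_eq k
    rw [← hn, ← hN] at h
    omega
  set D : ℕ → ℕ := fun t => ∏ i ∈ t.bitIndices.toFinset, fermat i with hD
  have hDsub : ∀ t < N, t.bitIndices.toFinset ⊆ Finset.range k := by
    intro t ht e he
    rw [List.mem_toFinset] at he
    have h1 : 2 ^ e ≤ t := Nat.two_pow_le_of_mem_bitIndices he
    have h2 : (2:ℕ) ^ e < 2 ^ k := lt_of_le_of_lt h1 ht
    exact Finset.mem_range.mpr ((Nat.pow_lt_pow_iff_right one_lt_two).mp h2)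
  have hDdvd : ∀ t < N, D t ∣ n :=
    fun t ht => Finset.prod_dvd_prod_of_subset _ _ _ (hDsub t ht)
  have hDtot : ∀ t < N, (D t).totient = 2 ^ t := by
    intro t ht
    rw [hD]
    rw [totient_prod_fermat (fun i hi => hprimes i (hDsub t ht hi)),
      sum_two_pow_bitIndices]
  have hDpos : ∀ t, 0 < D t := fun t => Finset.prod_pos (fun i _ => fermat_pos i)
  have hDinj : ∀ t1 ∈ Finset.range N, ∀ t2 ∈ Finset.range N, D t1 = D t2 → t1 = t2 := by
    intro t1 h1 t2 h2 h
    have e1 := hDtot t1 (Finset.mem_range.mp h1)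
    have e2 := hDtot t2 (Finset.mem_range.mp h2)
    rw [h, e2] at e1
    exact (Nat.pow_right_injective (le_refl 2) e1.symm)
  have himage : Finset.image D (Finset.range N) = n.divisors := by
    apply Finset.eq_of_subset_of_card_le
    · intro d hd
      obtain ⟨t, ht, rfl⟩ := Finset.mem_image.mp hd
      exact Nat.mem_divisors.mpr ⟨hDdvd t (Finset.mem_range.mp ht), hnpos.ne'⟩
    · rw [card_divisors_prod_fermat hk, Finset.card_image_of_injOn hDinj,
        Finset.card_range]
  set Q : ℕ → ℚ[X] := fun t => cyclotomic (D t) ℚ with hQ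
  have hfact : (X : ℚ[X]) ^ n - 1 = ∏ t ∈ Finset.range N, Q t := by
    rw [← prod_cyclotomic_eq_X_pow_sub_one hnpos ℚ, ← himage,
      Finset.prod_image hDinj]
  have hQm : ∀ t, (Q t).Monic := fun t => cyclotomic.monic _ ℚ
  have hQi : ∀ t ∈ Finset.range N, Irreducible (Q t) :=
    fun t _ => cyclotomic.irreducible_rat (hDpos t)
  have hQdeg : ∀ t < N, (Q t).natDegree = 2 ^ t := by
    intro t ht
    rw [hQ]
    rw [natDegree_cyclotomic, hDtot t ht]
  refine ⟨⟨hnpos, ?_⟩, ?_⟩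
  · intro m hm
    have hmN : m < 2 ^ N := by omega
    have hsubm : m.bitIndices.toFinset ⊆ Finset.range N := by
      intro e he
      rw [List.mem_toFinset] at he
      have h1 : 2 ^ e ≤ m := Nat.two_pow_le_of_mem_bitIndices he
      have h2 : (2:ℕ) ^ e < 2 ^ N := lt_of_le_of_lt h1 hmN
      exact Finset.mem_range.mpr ((Nat.pow_lt_pow_iff_right one_lt_two).mp h2)
    refine ⟨∏ t ∈ m.bitIndices.toFinset, Q t,
      ⟨monic_prod_of_monic _ _ (fun t _ => hQm t), ?_, ?_⟩, ?_⟩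
    · rw [hfact]
      exact Finset.prod_dvd_prod_of_subset _ _ _ hsubm
    · rw [Polynomial.natDegree_prod _ _ (fun t _ => (hQm t).ne_zero),
        Finset.sum_congr rfl
          (fun t ht => hQdeg t (Finset.mem_range.mp (hsubm ht)))]
      exact sum_two_pow_bitIndices m
    · rintro d ⟨hdm, hdvd, hdeg⟩
      rw [hfact] at hdvd
      obtain ⟨u, hus, hu⟩ :=
        monic_dvd_prod_structure (fun t _ => hQm t) hQi d hdm hdvd
      have hsum : ∑ t ∈ u, 2 ^ t = m := by
        rw [← hdeg, hu, Polynomial.natDegree_prod _ _ (fun t _ => (hQm t).ne_zero)]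
        exact (Finset.sum_congr rfl
          (fun t ht => hQdeg t (Finset.mem_range.mp (hus ht)))).symm
      have hueq : u = m.bitIndices.toFinset :=
        sum_two_pow_inj (by rw [hsum, sum_two_pow_bitIndices])
      rw [hu, hueq]
  · have hrw : (∏ p ∈ Finset.image fermat (Finset.range k), p) = n := by
      rw [Finset.prod_image (fun a _ b _ h => fermat_strictMono.injective h)]
    rw [← hrw, Nat.primeFactors_prod (fun p hp => by
      obtain ⟨i, hi, rfl⟩ := Finset.mem_image.mp hp
      exact hprimes i hi),
      Finset.card_image_of_injective _ fermat_strictMono.injective,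
      Finset.card_range]
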